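/- Weak main inequality: Under the hypotheses of the main inequality lemma (with x = (F,f,A,v) ∈ D obtained by x = x̃ + (b^p, ab, c, a^(p')), x̃ the midpoint of x₋, x₊ ∈ D, and a,b,c ≥ 0), one has B(x) − ½[B(x₋) + B(x₊)] ≥ (f^p / v^p) c. -/

import Mathlib

/-- Young-type tangent inequality: `p t^{p-1} f ≤ f^p/s^{p-1} + (p-1) t^p s`. -/
lemma young_key {p : ℝ} (hp : 1 < p) {f s t : ℝ} (hf : 0 ≤ f) (hs : 0 < s) (ht : 0 ≤ t) :
    p * (t ^ (p - 1) * f) ≤ f ^ p / s ^ (p - 1) + (p - 1) * (t ^ p * s) := by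
  have hp0 : (0:ℝ) < p := by linarith
  have hp1 : (0:ℝ) < p - 1 := by linarith
  have hconj : p.HolderConjugate (p / (p - 1)) := Real.HolderConjugate.conjExponent hp
  set q := p / (p - 1) with hq
  have hsp : (0:ℝ) < s ^ ((p - 1) / p) := Real.rpow_pos_of_pos hs _
  have key := Real.young_inequality_of_nonneg
    (a := f / s ^ ((p - 1) / p)) (b := t ^ (p - 1) * s ^ ((p - 1) / p))
    (div_nonneg hf hsp.le) (mul_nonneg (Real.rpow_nonneg ht _) hsp.le) hconj
  have hab : f / s ^ ((p - 1) / p) * (t ^ (p - 1) * s ^ ((p - 1) / p)) = t ^ (p - 1) * f := by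
    field_simp
  have hap : (f / s ^ ((p - 1) / p)) ^ p = f ^ p / s ^ (p - 1) := by
    rw [Real.div_rpow hf hsp.le, ← Real.rpow_mul hs.le, div_mul_cancel₀ _ hp0.ne']
  have hbq : (t ^ (p - 1) * s ^ ((p - 1) / p)) ^ q = t ^ p * s := by
    rw [Real.mul_rpow (Real.rpow_nonneg ht _) hsp.le, ← Real.rpow_mul ht, ← Real.rpow_mul hs.le]
    have h1 : (p - 1) * q = p := by rw [hq]; field_simp
    have h2 : (p - 1) / p * q = 1 := by rw [hq]; field_simp
    rw [h1, h2, Real.rpow_one]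
  rw [hab, hap, hbq] at key
  have hqv : (p - 1) * (t ^ p * s) = p * ((t ^ p * s) / q) := by
    rw [hq]; field_simp
  rw [hqv]
  calc p * (t ^ (p-1) * f) ≤ p * (f ^ p / s ^ (p-1) / p + t ^ p * s / q) := by
        exact mul_le_mul_of_nonneg_left key hp0.le
    _ = f ^ p / s ^ (p - 1) + p * (t ^ p * s / q) := by field_simp

/-- Basic identities for `φ(f,s) = f^p/s^{p-1}` with `t = f/s`. -/
lemma phi_ids {p : ℝ} (hp : 1 < p) {f s : ℝ} (hf : 0 ≤ f) (hs : 0 < s) :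
    (f/s) ^ (p-1) * f = f ^ p / s ^ (p-1) ∧ (f/s) ^ p * s = f ^ p / s ^ (p-1) ∧
      (f/s) ^ p = f ^ p / s ^ p := by
  have hp1 : (0:ℝ) < p - 1 := by linarith
  have idC : (f/s) ^ p = f ^ p / s ^ p := Real.div_rpow hf hs.le p
  have hsp1 : (0:ℝ) < s ^ (p-1) := Real.rpow_pos_of_pos hs _
  have hspl : s ^ p = s ^ (p-1) * s := by
    have := Real.rpow_add_one hs.ne' (p-1)
    rwa [sub_add_cancel] at this
  refine ⟨?_, ?_, idC⟩
  · rcases eq_or_lt_of_le hf with h0 | h0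
    · rw [← h0]
      simp [Real.zero_rpow (show p ≠ 0 by linarith)]
    · rw [Real.div_rpow hf hs.le]
      have hfl : f ^ (p-1) * f = f ^ p := by
        have := Real.rpow_add_one h0.ne' (p-1)
        rw [sub_add_cancel] at this; rw [this]
      rw [div_mul_eq_mul_div, hfl]
  · rw [idC, hspl]
    field_simp

/-- Two-point midpoint Radon inequality. -/
lemma radon_mid {p : ℝ} (hp : 1 < p) {f1 s1 f2 s2 : ℝ}
    (hf1 : 0 ≤ f1) (hs1 : 0 < s1) (hf2 : 0 ≤ f2) (hs2 : 0 < s2) :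
    ((f1+f2)/2) ^ p / ((s1+s2)/2) ^ (p-1) ≤ (f1 ^ p / s1 ^ (p-1) + f2 ^ p / s2 ^ (p-1)) / 2 := by
  set ft := (f1+f2)/2 with hft_eq
  set st := (s1+s2)/2 with hst_eq
  have hft : 0 ≤ ft := by rw [hft_eq]; linarith
  have hst : 0 < st := by rw [hst_eq]; linarith
  set u := ft/st with hu_eq
  have hu : 0 ≤ u := div_nonneg hft hst.le
  obtain ⟨idA, idB, -⟩ := phi_ids hp hft hst
  have k1 := young_key hp hf1 hs1 hu
  have k2 := young_key hp hf2 hs2 hu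
  have idmix : p * (u ^ (p-1) * ft) - (p-1) * (u ^ p * st) = ft ^ p / st ^ (p-1) := by
    linear_combination p * idA - (p-1) * idB
  have E : p * (u ^ (p-1) * f1) + p * (u ^ (p-1) * f2)
      - (p-1) * (u ^ p * s1) - (p-1) * (u ^ p * s2)
      = 2 * (p * (u ^ (p-1) * ft) - (p-1) * (u ^ p * st)) := by
    rw [hft_eq, hst_eq]; ring
  linarith [k1, k2, E, idmix]



/-- The domain `D` of the Bellman function. -/
def bellmanDomain (p : ℝ) : Set (ℝ × ℝ × ℝ × ℝ) :=
  {x | 0 ≤ x.1 ∧ 0 ≤ x.2.1 ∧ 0 < x.2.2.1 ∧ 0 < x.2.2.2 ∧ x.2.2.1 ≤ x.2.2.2 ∧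
    x.2.1 ^ p ≤ x.1 * x.2.2.2 ^ (p - 1)}

/-- The Bellman function `B`. -/
noncomputable def bellmanB (p : ℝ) (x : ℝ × ℝ × ℝ × ℝ) : ℝ :=
  (p / (p - 1)) ^ p * x.1 - (p ^ p / (p - 1)) * x.2.1 ^ p / (x.2.2.1 + (p - 1) * x.2.2.2) ^ (p - 1)

set_option maxHeartbeats 1000000 in
theorem bellman_main_inequality_weak (p p' : ℝ) (hp : 1 < p) (hp' : p' = p / (p - 1))
    (Fm fm Am vm Fp fp Ap vp : ℝ)
    (hm : (Fm, fm, Am, vm) ∈ bellmanDomain p)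
    (hpl : (Fp, fp, Ap, vp) ∈ bellmanDomain p)
    (a b c : ℝ) (ha : 0 ≤ a) (hb : 0 ≤ b) (hc : 0 ≤ c)
    (F f A v : ℝ)
    (hF : F = (Fm + Fp) / 2 + b ^ p)
    (hf : f = (fm + fp) / 2 + a * b)
    (hA : A = (Am + Ap) / 2 + c)
    (hv : v = (vm + vp) / 2 + a ^ p')
    (hx : (F, f, A, v) ∈ bellmanDomain p) :
    bellmanB p (F, f, A, v) -
      (1 / 2) * (bellmanB p (Fm, fm, Am, vm) + bellmanB p (Fp, fp, Ap, vp)) ≥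
      f ^ p / v ^ p * c := by
  simp only [bellmanDomain, Set.mem_setOf_eq] at hm hpl hx
  obtain ⟨hF0, hf0, hA0, hv0, hAv, -⟩ := hx
  obtain ⟨-, hfm0, hAm0, hvm0, hAvm, -⟩ := hm
  obtain ⟨-, hfp0, hApo0, hvp0, hAvp, -⟩ := hpl
  have hp0 : (0:ℝ) < p := by linarith
  have hp1 : (0:ℝ) < p - 1 := by linarith
  set C := (p / (p - 1)) ^ p with hC_eq
  set K := p ^ p / (p - 1) with hK_eq
  have hC0 : 0 < C := Real.rpow_pos_of_pos (div_pos hp0 hp1) _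
  have hK0 : 0 < K := div_pos (Real.rpow_pos_of_pos hp0 _) hp1
  set s := A + (p-1) * v with hs_eq
  set sm := Am + (p-1) * vm with hsm_eq
  set sq := Ap + (p-1) * vp with hsq_eq
  have hs0 : 0 < s := by rw [hs_eq]; have := mul_pos hp1 hv0; linarith only [hA0, this]
  have hsm0 : 0 < sm := by rw [hsm_eq]; have := mul_pos hp1 hvm0; linarith only [hAm0, this]
  have hsq0 : 0 < sq := by rw [hsq_eq]; have := mul_pos hp1 hvp0; linarith only [hApo0, this]
  set ft := (fm + fp) / 2 with hft_eq
  set st := (sm + sq) / 2 with hst_eq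
  have hft0 : 0 ≤ ft := by rw [hft_eq]; linarith
  have hst0 : 0 < st := by rw [hst_eq]; linarith
  set t := f / s with ht_eq
  clear_value C K s sm sq ft st t
  have ht0 : 0 ≤ t := by rw [ht_eq]; exact div_nonneg hf0 hs0.le
  obtain ⟨idA, idB, idC⟩ := phi_ids hp hf0 hs0
  rw [← ht_eq] at idA idB idC
  -- goal rewrite
  have goal_eq : bellmanB p (F, f, A, v) -
      (1 / 2) * (bellmanB p (Fm, fm, Am, vm) + bellmanB p (Fp, fp, Ap, vp))
      = C * b ^ p + K * ((fm ^ p / sm ^ (p-1) + fp ^ p / sq ^ (p-1)) / 2)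
        - K * (f ^ p / s ^ (p-1)) := by
    simp only [bellmanB]
    rw [hF, hC_eq, hK_eq, hs_eq, hsm_eq, hsq_eq]
    ring
  rw [ge_iff_le, ← sub_nonneg, goal_eq]
  -- step 1: Radon
  have hrad : ft ^ p / st ^ (p-1) ≤ (fm ^ p / sm ^ (p-1) + fp ^ p / sq ^ (p-1)) / 2 := by
    rw [hft_eq, hst_eq]
    exact radon_mid hp hfm0 hsm0 hfp0 hsq0
  have s1 := mul_le_mul_of_nonneg_left hrad hK0.le
  -- step 2: tangent-plane
  have htan : p * (t ^ (p-1) * ft) - (p-1) * (t ^ p * st) ≤ ft ^ p / st ^ (p-1) := by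
    linarith [young_key hp hft0 hst0 ht0]
  have s2 := mul_le_mul_of_nonneg_left htan hK0.le
  -- splitting identities
  have hfsplit : ft = f - a * b := by rw [hf]; ring
  have hssplit : st = s - c - (p-1) * a ^ p' := by
    rw [hst_eq, hsm_eq, hsq_eq, hs_eq, hA, hv]; ring
  have e1 : t ^ (p-1) * ft = t ^ (p-1) * f - t ^ (p-1) * (a * b) := by
    rw [hfsplit]; ring
  have e2 : t ^ p * st = t ^ p * s - t ^ p * c - (p-1) * (t ^ p * a ^ p') := by
    rw [hssplit]; ring
  have s3 : K * (p * (t ^ (p-1) * ft) - (p-1) * (t ^ p * st)) - K * (f ^ p / s ^ (p-1))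
      = K * ((p-1) * (t ^ p * c)) + K * ((p-1) * ((p-1) * (t ^ p * a ^ p')))
        - K * (p * (t ^ (p-1) * (a * b))) := by
    linear_combination (K * p) * e1 - (K * (p-1)) * e2 + (K * p) * idA - (K * (p-1)) * idB
  -- step 3: Young for the a,b terms
  have hyoung : K * (p * (t ^ (p-1) * (a * b)))
      ≤ C * b ^ p + K * ((p-1) * ((p-1) * (t ^ p * a ^ p'))) := by
    rcases eq_or_lt_of_le ha with h0 | h0
    · have hp'0 : p' ≠ 0 := by rw [hp']; exact ne_of_gt (div_pos hp0 hp1)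
      rw [← h0, Real.zero_rpow hp'0]
      have l1 : K * (p * (t ^ (p-1) * ((0:ℝ) * b))) = 0 := by ring
      have l2 : K * ((p-1) * ((p-1) * (t ^ p * (0:ℝ)))) = 0 := by ring
      have l3 : 0 ≤ C * b ^ p := mul_nonneg hC0.le (Real.rpow_nonneg hb p)
      linarith only [l1, l2, l3]
    · have hap' : 0 < a ^ p' := Real.rpow_pos_of_pos h0 _
      have hsig : 0 < (p-1) * a ^ p' := mul_pos hp1 hap'
      have key2 := young_key hp (mul_nonneg ha hb) hsig ht0
      have hppm : p' * (p-1) = p := by rw [hp']; field_simp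
      have e3 : (a * b) ^ p / ((p-1) * a ^ p') ^ (p-1) = b ^ p / (p-1) ^ (p-1) := by
        rw [Real.mul_rpow ha hb, Real.mul_rpow hp1.le hap'.le, ← Real.rpow_mul h0.le, hppm]
        have hap0 : (0:ℝ) < a ^ p := Real.rpow_pos_of_pos h0 _
        have hpp0 : (0:ℝ) < (p-1) ^ (p-1) := Real.rpow_pos_of_pos hp1 _
        field_simp
      have hpl2 : (p-1) ^ p = (p-1) ^ (p-1) * (p-1) := by
        have := Real.rpow_add_one hp1.ne' (p-1)
        rwa [sub_add_cancel] at this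
      have eC : K * (b ^ p / (p-1) ^ (p-1)) = C * b ^ p := by
        rw [hK_eq, hC_eq, Real.div_rpow hp0.le hp1.le p, hpl2,
          div_mul_div_comm, div_mul_eq_mul_div, mul_comm ((p-1) ^ (p-1)) (p-1)]
      calc K * (p * (t ^ (p-1) * (a * b)))
          ≤ K * ((a * b) ^ p / ((p-1) * a ^ p') ^ (p-1) + (p-1) * (t ^ p * ((p-1) * a ^ p'))) :=
            mul_le_mul_of_nonneg_left key2 hK0.le
        _ = C * b ^ p + K * ((p-1) * ((p-1) * (t ^ p * a ^ p'))) := by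
            rw [mul_add, e3, eC]; ring
  -- step 4: K(p-1) = p^p and comparison with f^p/v^p
  have hKp : K * (p-1) = p ^ p := by rw [hK_eq]; field_simp
  have s4 : K * ((p-1) * (t ^ p * c)) = p ^ p * (t ^ p * c) := by
    linear_combination (t ^ p * c) * hKp
  have hspv : s ^ p ≤ p ^ p * v ^ p := by
    rw [← Real.mul_rpow hp0.le hv0.le]
    apply Real.rpow_le_rpow hs0.le _ hp0.le
    rw [hs_eq]; linarith only [hAv]
  have h6 : f ^ p / v ^ p ≤ p ^ p * t ^ p := by
    rw [idC]
    have hvp0' : (0:ℝ) < v ^ p := Real.rpow_pos_of_pos hv0 _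
    have hsp0' : (0:ℝ) < s ^ p := Real.rpow_pos_of_pos hs0 _
    have hfp0' : (0:ℝ) ≤ f ^ p := Real.rpow_nonneg hf0 _
    rw [div_le_iff₀ hvp0', mul_comm (p ^ p) (f ^ p / s ^ p), mul_assoc,
      div_mul_eq_mul_div, le_div_iff₀ hsp0']
    linarith only [mul_le_mul_of_nonneg_left hspv hfp0']
  have s6 : f ^ p / v ^ p * c ≤ p ^ p * (t ^ p * c) := by
    have := mul_le_mul_of_nonneg_right h6 hc
    have e7 : p ^ p * t ^ p * c = p ^ p * (t ^ p * c) := by ring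
    linarith only [this, e7]
  linarith only [s1, s2, s3, hyoung, s4, s6]
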